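/- Let y ∈ Δⁿ. Then the relative interior of the normal cone N_{Δⁿ}(y) equals the set of vectors τe − w with τ ∈ ℝ and w ∈ ℝⁿ₊ such that wᵢ = 0 if and only if yᵢ > 0. -/

import Mathlib

open Filter Topology RealInnerProductSpace

lemma normalCone_char (n : ℕ) (y : EuclideanSpace ℝ (Fin n))
    (hy : y.ofLp ∈ stdSimplex ℝ (Fin n)) (i₀ : Fin n) (hi₀ : 0 < y i₀) :
    {ξ : EuclideanSpace ℝ (Fin n) |
        ∀ x : EuclideanSpace ℝ (Fin n), x.ofLp ∈ stdSimplex ℝ (Fin n) → ⟪ξ, x - y⟫ ≤ 0}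
      = {ξ : EuclideanSpace ℝ (Fin n) |
          (∀ i, ξ i ≤ ξ i₀) ∧ ∀ i, 0 < y i → ξ i = ξ i₀} := by
  have hinner : ∀ ξ x : EuclideanSpace ℝ (Fin n),
      ⟪ξ, x - y⟫ = ∑ i, ξ i * (x i - y i) := by
    intro ξ x
    simp [PiLp.inner_apply, RCLike.inner_apply, mul_comm]
  ext ξ
  simp only [Set.mem_setOf_eq]
  constructor
  · intro h
    set c : ℝ := ∑ i, ξ i * y i with hc
    have hle : ∀ i, ξ i ≤ c := by
      intro i
      have hmem : (EuclideanSpace.single i 1 : EuclideanSpace ℝ (Fin n)).ofLp ∈ stdSimplex ℝ (Fin n) := by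
        constructor
        · intro j; rw [EuclideanSpace.single_apply]; positivity
        · simp [EuclideanSpace.single_apply]
      have hv := h (EuclideanSpace.single i 1) hmem
      rw [hinner] at hv
      have : ∑ j, ξ j * ((EuclideanSpace.single i (1:ℝ)) j - y j)
          = ξ i - ∑ j, ξ j * y j := by
        have : ∀ j ∈ Finset.univ, ξ j * ((EuclideanSpace.single i (1:ℝ)) j - y j)
            = (if j = i then ξ i else 0) - ξ j * y j := by
          intro j _
          rw [EuclideanSpace.single_apply]
          rcases eq_or_ne j i with hj | hj
          · subst hj; simp; ring
          · simp [hj]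
        rw [Finset.sum_congr rfl this, Finset.sum_sub_distrib, Finset.sum_ite_eq']
        simp
      rw [this] at hv
      linarith
    have hsum0 : ∑ i, y i * (c - ξ i) = 0 := by
      have h1 : ∑ i, y i = 1 := hy.2
      have : ∑ i, y i * (c - ξ i) = c * ∑ i, y i - ∑ i, ξ i * y i := by
        rw [Finset.mul_sum, ← Finset.sum_sub_distrib]
        exact Finset.sum_congr rfl fun i _ => by ring
      rw [this, h1, hc]; ring
    have hz : ∀ i ∈ Finset.univ, y i * (c - ξ i) = 0 := by
      rw [← Finset.sum_eq_zero_iff_of_nonneg]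
      · exact hsum0
      · intro i _
        exact mul_nonneg (hy.1 i) (by linarith [hle i])
    have heq : ∀ i, 0 < y i → ξ i = c := by
      intro i hyi
      have := hz i (Finset.mem_univ i)
      rcases mul_eq_zero.mp this with h' | h'
      · exact absurd h' (ne_of_gt hyi)
      · linarith
    have hc0 : ξ i₀ = c := heq i₀ hi₀
    exact ⟨fun i => hc0 ▸ hle i, fun i hi => by rw [heq i hi, hc0]⟩
  · rintro ⟨hle, heq⟩ x hx
    rw [hinner]
    have h1 : ∑ i, ξ i * y i = ξ i₀ := by
      have : ∀ i ∈ Finset.univ, ξ i * y i = ξ i₀ * y i := by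
        intro i _
        rcases eq_or_lt_of_le (hy.1 i) with h' | h'
        · rw [← h', mul_zero, mul_zero]
        · rw [heq i h']
      rw [Finset.sum_congr rfl this, ← Finset.mul_sum, hy.2, mul_one]
    have h2 : ∑ i, ξ i * x i ≤ ξ i₀ := by
      calc ∑ i, ξ i * x i ≤ ∑ i, ξ i₀ * x i :=
            Finset.sum_le_sum fun i _ => mul_le_mul_of_nonneg_right (hle i) (hx.1 i)
        _ = ξ i₀ := by rw [← Finset.mul_sum, hx.2, mul_one]
    have : ∑ i, ξ i * (x i - y i) = (∑ i, ξ i * x i) - ∑ i, ξ i * y i := by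
      rw [← Finset.sum_sub_distrib]
      exact Finset.sum_congr rfl fun i _ => by ring
    rw [this, h1]
    linarith

lemma mem_intrinsicInterior_iff_nhdsWithin {E : Type*} [NormedAddCommGroup E] [NormedSpace ℝ E]
    {s : Set E} {x : E} :
    x ∈ intrinsicInterior ℝ s ↔
      x ∈ (affineSpan ℝ s : Set E) ∧ s ∈ 𝓝[(affineSpan ℝ s : Set E)] x := by
  rw [mem_intrinsicInterior]
  constructor
  · rintro ⟨x', hx', rfl⟩
    refine ⟨x'.2, ?_⟩
    rw [← map_nhds_subtype_val, mem_map]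
    exact mem_interior_iff_mem_nhds.mp hx'
  · rintro ⟨hx, hs⟩
    refine ⟨⟨x, hx⟩, ?_, rfl⟩
    rw [mem_interior_iff_mem_nhds, ← mem_map, map_nhds_subtype_val]
    exact hs

/-- The relative interior of the normal cone of the probability simplex at `y`
consists of vectors `τ e - w` with `w ≥ 0` and `wᵢ = 0 ↔ yᵢ > 0`. -/
theorem relint_normalCone_stdSimplex (n : ℕ) (y : EuclideanSpace ℝ (Fin n))
    (hy : y.ofLp ∈ stdSimplex ℝ (Fin n)) :
    intrinsicInterior ℝ
        {ξ : EuclideanSpace ℝ (Fin n) |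
          ∀ x : EuclideanSpace ℝ (Fin n), x.ofLp ∈ stdSimplex ℝ (Fin n) → ⟪ξ, x - y⟫ ≤ 0}
      = {v : EuclideanSpace ℝ (Fin n) | ∃ (τ : ℝ) (w : EuclideanSpace ℝ (Fin n)),
          (∀ i, 0 ≤ w i) ∧ (∀ i, w i = 0 ↔ 0 < y i) ∧ ∀ i, v i = τ - w i} := by
  classical
  obtain ⟨i₀, hi₀⟩ : ∃ i, 0 < y i := by
    by_contra h
    push_neg at h
    have h0 : ∑ i, y i = 0 := Finset.sum_eq_zero fun i _ => le_antisymm (h i) (hy.1 i)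
    rw [hy.2] at h0; norm_num at h0
  rw [normalCone_char n y hy i₀ hi₀]
  set N : Set (EuclideanSpace ℝ (Fin n)) :=
    {ξ | (∀ i, ξ i ≤ ξ i₀) ∧ ∀ i, 0 < y i → ξ i = ξ i₀} with hNdef
  set Lsub : Submodule ℝ (EuclideanSpace ℝ (Fin n)) :=
    { carrier := {ξ | ∀ i, 0 < y i → ξ i = ξ i₀}
      add_mem' := by
        intro a b ha hb i hyi
        simp only [Set.mem_setOf_eq] at ha hb
        simp [PiLp.add_apply, ha i hyi, hb i hyi]
      zero_mem' := by intro i hyi; simp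
      smul_mem' := by
        intro c a ha i hyi
        simp only [Set.mem_setOf_eq] at ha
        simp [PiLp.smul_apply, ha i hyi] } with hLdef
  have hNL : N ⊆ (Lsub : Set (EuclideanSpace ℝ (Fin n))) := fun ξ hξ => hξ.2
  have hspan : (affineSpan ℝ N : Set (EuclideanSpace ℝ (Fin n)))
      = (Lsub : Set (EuclideanSpace ℝ (Fin n))) := by
    apply Set.Subset.antisymm
    · have hle : affineSpan ℝ N ≤ Lsub.toAffineSubspace := by
        rw [affineSpan_le]
        exact hNL
      exact fun x hx => hle hx
    · intro ξ hξ
      have hξ' : ∀ i, 0 < y i → ξ i = ξ i₀ := hξ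
      set a : EuclideanSpace ℝ (Fin n) := WithLp.toLp 2 (fun i => min (ξ i) (ξ i₀)) with ha
      set b : EuclideanSpace ℝ (Fin n) := a - ξ with hb
      have hai : ∀ i, a i = min (ξ i) (ξ i₀) := fun i => rfl
      have hbi : ∀ i, b i = min (ξ i) (ξ i₀) - ξ i := fun i => by
        rw [hb, PiLp.sub_apply, hai]
      have haN : a ∈ N := by
        constructor
        · intro i; rw [hai, hai, min_self]; exact min_le_right _ _
        · intro i hyi; rw [hai, hai, min_self, hξ' i hyi, min_self]
      have hbN : b ∈ N := by
        constructor
        · intro i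
          rw [hbi, hbi, min_self, sub_self]
          linarith [min_le_left (ξ i) (ξ i₀)]
        · intro i hyi
          rw [hbi, hbi, min_self, sub_self, hξ' i hyi, min_self, sub_self]
      have h0N : (0 : EuclideanSpace ℝ (Fin n)) ∈ N := by
        constructor
        · intro i; simp
        · intro i _; simp
      have hmem := AffineSubspace.smul_vsub_vadd_mem (affineSpan ℝ N) (1:ℝ)
        (subset_affineSpan ℝ N haN) (subset_affineSpan ℝ N hbN) (subset_affineSpan ℝ N h0N)
      have heq : (1:ℝ) • (a -ᵥ b) +ᵥ (0 : EuclideanSpace ℝ (Fin n)) = ξ := by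
        rw [vsub_eq_sub, vadd_eq_add, hb]
        simp
      rwa [heq] at hmem
  ext v
  rw [mem_intrinsicInterior_iff_nhdsWithin, hspan]
  simp only [Set.mem_setOf_eq]
  constructor
  · rintro ⟨hvL, hmem⟩
    have hvL' : ∀ i, 0 < y i → v i = v i₀ := hvL
    have hvN : v ∈ N := mem_of_mem_nhdsWithin hvL hmem
    have hstrict : ∀ i, y i = 0 → v i < v i₀ := by
      intro i hyi
      rcases lt_or_eq_of_le (hvN.1 i) with h | h
      · exact h
      · exfalso
        have hii₀ : i ≠ i₀ := fun h' => hi₀.ne' (h' ▸ hyi)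
        set u : EuclideanSpace ℝ (Fin n) := EuclideanSpace.single i 1 with hu
        have huj : ∀ j, u j = if j = i then (1:ℝ) else 0 := fun j =>
          EuclideanSpace.single_apply i 1 j
        have htt : Filter.Tendsto (fun t : ℝ => v + t • u) (nhdsWithin 0 (Set.Ioi 0))
            (nhdsWithin v (Lsub : Set (EuclideanSpace ℝ (Fin n)))) := by
          rw [tendsto_nhdsWithin_iff]
          constructor
          · have hc : Continuous fun t : ℝ => v + t • u := by continuity
            have h2 := hc.tendsto 0
            rw [show v + (0:ℝ) • u = v by simp] at h2
            exact h2.mono_left nhdsWithin_le_nhds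
          · refine Filter.Eventually.of_forall fun t => ?_
            intro j hyj
            have hji : j ≠ i := by
              intro h'; rw [h', hyi] at hyj; exact lt_irrefl 0 hyj
            simp only [PiLp.add_apply, PiLp.smul_apply, smul_eq_mul, huj,
              if_neg hji, if_neg hii₀.symm, mul_zero, add_zero]
            exact hvL' j hyj
        obtain ⟨t, htN, ht0⟩ := ((htt.eventually hmem).and self_mem_nhdsWithin).exists
        have h1 : (v + t • u) i ≤ (v + t • u) i₀ := htN.1 i
        simp only [PiLp.add_apply, PiLp.smul_apply, smul_eq_mul, huj,
          if_pos rfl, if_neg hii₀.symm, mul_one, mul_zero, add_zero] at h1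
        norm_num at h1
        rw [h] at h1
        have ht0' : (0:ℝ) < t := ht0
        linarith
    refine ⟨v i₀, (WithLp.toLp 2 (fun i => v i₀ - v i) : EuclideanSpace ℝ (Fin n)), ?_, ?_, ?_⟩
    · intro i
      exact sub_nonneg.mpr (hvN.1 i)
    · intro i
      constructor
      · intro h0
        replace h0 : v i₀ - v i = 0 := h0
        rcases (hy.1 i).lt_or_eq with hpos | hzero
        · exact hpos
        · exfalso
          have := hstrict i hzero.symm
          rw [sub_eq_zero] at h0
          linarith [h0]
      · intro h0
        show v i₀ - v i = 0
        rw [hvL' i h0, sub_self]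
    · intro i
      show v i = v i₀ - (v i₀ - v i)
      ring
  · rintro ⟨τ, w, hw0, hw, hvw⟩
    have hwi₀ : w i₀ = 0 := (hw i₀).mpr hi₀
    have hvi₀ : v i₀ = τ := by rw [hvw i₀, hwi₀, sub_zero]
    have hvL : ∀ i, 0 < y i → v i = v i₀ := by
      intro i hyi
      rw [hvw i, (hw i).mpr hyi, sub_zero, hvi₀]
    refine ⟨hvL, ?_⟩
    rw [mem_nhdsWithin]
    refine ⟨{z : EuclideanSpace ℝ (Fin n) | ∀ i, y i = 0 → z i < z i₀}, ?_, ?_, ?_⟩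
    · have hU : {z : EuclideanSpace ℝ (Fin n) | ∀ i, y i = 0 → z i < z i₀}
          = ⋂ i, {z : EuclideanSpace ℝ (Fin n) | y i = 0 → z i < z i₀} := by
        ext z; simp [Set.mem_iInter, Set.mem_setOf_eq]
      rw [hU]
      refine isOpen_iInter_of_finite fun i => ?_
      by_cases hyi : y i = 0
      · have h1 : {z : EuclideanSpace ℝ (Fin n) | y i = 0 → z i < z i₀}
            = {z : EuclideanSpace ℝ (Fin n) | z i < z i₀} := by ext z; simp [hyi]
        rw [h1]
        exact isOpen_lt (EuclideanSpace.proj i).continuous (EuclideanSpace.proj i₀).continuous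
      · have h1 : {z : EuclideanSpace ℝ (Fin n) | y i = 0 → z i < z i₀} = Set.univ := by
          ext z; simp [hyi]
        rw [h1]; exact isOpen_univ
    · intro i hyi
      have hwi : w i ≠ 0 := by
        intro h0
        have := (hw i).mp h0
        rw [hyi] at this
        exact lt_irrefl 0 this
      have hwpos : 0 < w i := lt_of_le_of_ne (hw0 i) (Ne.symm hwi)
      rw [hvw i, hvi₀]; linarith
    · rintro z ⟨hzU, hzL⟩
      have hzL' : ∀ i, 0 < y i → z i = z i₀ := hzL
      refine ⟨fun i => ?_, hzL'⟩
      rcases (hy.1 i).lt_or_eq with h | h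
      · exact le_of_eq (hzL' i h)
      · exact le_of_lt (hzU i h.symm)
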